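/- Let G(m, b, d) be a D3 graph. Then the translation map x ↦ x + 2*b on ZMod (2*m) is a graph automorphism of G(m, b, d); that is, x and y are adjacent in G(m, b, d) if and only if x + 2*b and y + 2*b are adjacent in G(m, b, d). (This is the rotational symmetry associated with symmetry factor b.) -/

import Mathlib

/-- The chord/successor relation underlying the D3 graph: `y` follows `x` along the
Hamiltonian cycle, or `y` is reached from an odd-labelled `x` by the chord `d j`,
where `j` is the (unique) index with `x.val ≡ 2*j + 1 (mod 2*b)`. -/
def d3Rel (m b : ℕ) (d : Fin b → ℕ) (x y : ZMod (2 * m)) : Prop :=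
  y = x + 1 ∨
    (Odd x.val ∧ ∃ j : Fin b, x.val % (2 * b) = 2 * (j : ℕ) + 1 ∧ y = x + (d j : ZMod (2 * m)))

/-- The D3 graph `G(m, b, d)` of order `2*m` with symmetry factor `b` and
chord indices `d : Fin b → ℕ`: distinct vertices `x y : ZMod (2*m)` are adjacent iff
`y = x + 1`, or `y = x - 1`, or `x` is odd and `y = x + d j` for the unique `j` with
`x.val ≡ 2*j + 1 (mod 2*b)`, or `y` is odd and `x = y + d j` likewise. -/
def D3Graph (m b : ℕ) (d : Fin b → ℕ) : SimpleGraph (ZMod (2 * m)) where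
  Adj x y := x ≠ y ∧ (d3Rel m b d x y ∨ d3Rel m b d y x)
  symm := by
    constructor
    intro x y h
    exact ⟨h.1.symm, h.2.symm⟩
  loopless := by
    constructor
    intro x h
    exact h.1 rfl

/-- Translation by `2*b` is an automorphism of the D3 graph `G(m, b, d)`. -/
theorem stmt_2 (m b : ℕ) (hm : 2 ≤ m) (hb : 1 ≤ b) (hbm : b ∣ m)
    (d : Fin b → ℕ) (hodd : ∀ j, Odd (d j)) (h3 : ∀ j, 3 ≤ d j)
    (hle : ∀ j, d j ≤ 2 * m - 3) :
    ∀ x y : ZMod (2 * m),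
      (D3Graph m b d).Adj x y ↔
        (D3Graph m b d).Adj (x + ((2 * b : ℕ) : ZMod (2 * m))) (y + ((2 * b : ℕ) : ZMod (2 * m))) := by
  have hmpos : 0 < 2 * m := by omega
  haveI : NeZero (2 * m) := ⟨by omega⟩
  have hbm2 : 2 * b ∣ 2 * m := mul_dvd_mul_left 2 hbm
  have hble : b ≤ m := Nat.le_of_dvd (by omega) hbm
  -- 2*b % (2*m) is divisible by 2*b
  have hdvd : 2 * b ∣ 2 * b % (2 * m) := by
    rcases eq_or_lt_of_le hble with h | h
    · subst h; simp
    · rw [Nat.mod_eq_of_lt (by omega)]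
  have hval : ∀ x : ZMod (2 * m),
      (x + ((2 * b : ℕ) : ZMod (2 * m))).val % (2 * b) = x.val % (2 * b) := by
    intro x
    rw [ZMod.val_add, ZMod.val_natCast, Nat.mod_mod_of_dvd _ hbm2,
      Nat.add_mod, Nat.mod_eq_zero_of_dvd hdvd, Nat.add_zero, Nat.mod_mod_of_dvd _ (dvd_refl _)]
  have hoddv : ∀ x : ZMod (2 * m),
      (Odd (x + ((2 * b : ℕ) : ZMod (2 * m))).val ↔ Odd x.val) := by
    intro x
    have h2 : (2 : ℕ) ∣ 2 * b := ⟨b, rfl⟩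
    rw [Nat.odd_iff, Nat.odd_iff, ← Nat.mod_mod_of_dvd _ h2, hval,
      Nat.mod_mod_of_dvd _ h2]
  have hrel : ∀ x y : ZMod (2 * m), d3Rel m b d x y ↔
      d3Rel m b d (x + ((2 * b : ℕ) : ZMod (2 * m))) (y + ((2 * b : ℕ) : ZMod (2 * m))) := by
    intro x y
    unfold d3Rel
    constructor
    · rintro (rfl | ⟨hox, j, hj, rfl⟩)
      · left; ring
      · right
        refine ⟨(hoddv x).mpr hox, j, by rw [hval]; exact hj, by ring⟩
    · rintro (h | ⟨hox, j, hj, h⟩)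
      · left
        have : y + ((2 * b : ℕ) : ZMod (2 * m)) = x + 1 + ((2 * b : ℕ) : ZMod (2 * m)) := by
          rw [h]; ring
        exact add_right_cancel this
      · right
        refine ⟨(hoddv x).mp hox, j, by rw [← hval x]; exact hj, ?_⟩
        have : y + ((2 * b : ℕ) : ZMod (2 * m)) = x + (d j : ZMod (2 * m)) + ((2 * b : ℕ) : ZMod (2 * m)) := by
          rw [h]; ring
        exact add_right_cancel this
  intro x y
  unfold D3Graph
  simp only [SimpleGraph.Adj]
  constructor
  · rintro ⟨hne, h⟩
    refine ⟨fun he => hne (add_right_cancel he), ?_⟩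
    rcases h with h | h
    · exact Or.inl ((hrel x y).mp h)
    · exact Or.inr ((hrel y x).mp h)
  · rintro ⟨hne, h⟩
    refine ⟨fun he => hne (by rw [he]), ?_⟩
    rcases h with h | h
    · exact Or.inl ((hrel x y).mpr h)
    · exact Or.inr ((hrel y x).mpr h)
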